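/- Let μ be a symmetric probability measure on ℝ and f_u(x) = max{x − u, 0} for u ≥ 0. Then Var_μ(f_u) ≥ (1/4)·∫ f_u² dμ ≥ (1/4)·s²·μ[u+s, ∞) for any s > 0. -/

import Mathlib

open MeasureTheory Set Real ProbabilityTheory

theorem stmt9 (μ : Measure ℝ) [IsProbabilityMeasure μ]
    (hsym : μ.map (fun x => -x) = μ)
    (u : ℝ) (hu : 0 ≤ u) (s : ℝ) (hs : 0 < s) :
    ENNReal.ofReal (1 / 4) * ∫⁻ x, ENNReal.ofReal ((max (x - u) 0) ^ 2) ∂μ ≤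
        evariance (fun x => max (x - u) 0) μ ∧
      ENNReal.ofReal (1 / 4 * s ^ 2) * μ (Set.Ici (u + s)) ≤
        ENNReal.ofReal (1 / 4) * ∫⁻ x, ENNReal.ofReal ((max (x - u) 0) ^ 2) ∂μ := by
  set f : ℝ → ℝ := fun x => max (x - u) 0 with hf
  have hfm : Measurable f := (measurable_id.sub_const u).max measurable_const
  have hfnn : ∀ x, 0 ≤ f x := fun x => le_max_right _ _
  set I : ENNReal := ∫⁻ x, ENNReal.ofReal (f x ^ 2) ∂μ with hI
  -- μ(Ioi u) ≤ 1/2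
  have hhalf : μ (Set.Ioi u) ≤ ENNReal.ofReal (1/2) := by
    have h1 : μ (Set.Ioi 0) = μ (Set.Iio 0) := by
      conv_rhs => rw [← hsym]
      rw [Measure.map_apply (by fun_prop) measurableSet_Iio]
      congr 1
      ext x; simp
    have h2 : μ (Set.Ioi 0) + μ (Set.Iio 0) ≤ 1 := by
      rw [← measure_union (Set.disjoint_left.mpr (fun x hx hx' => absurd (hx.trans (show x < 0 from hx')) (lt_irrefl 0))) measurableSet_Iio]
      exact (measure_mono (subset_univ _)).trans_eq measure_univ
    have h3 : μ (Set.Ioi u) ≤ μ (Set.Ioi 0) := measure_mono (fun x hx => lt_of_le_of_lt hu hx)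
    rw [← h1, ← two_mul] at h2
    refine h3.trans ?_
    rw [ENNReal.ofReal_div_of_pos (by norm_num)]
    rw [ENNReal.le_div_iff_mul_le (by simp) (by simp), mul_comm]
    simpa using h2
  constructor
  · -- variance bound
    have hev : evariance f μ = I - ENNReal.ofReal ((∫ x, f x ∂μ) ^ 2) := by
      rw [evariance_def' hfm.aestronglyMeasurable]
      congr 1
      refine lintegral_congr fun x => ?_
      rw [Real.enorm_eq_ofReal (hfnn x), ENNReal.ofReal_pow (hfnn x)]
    rw [hev]
    refine ENNReal.le_sub_of_add_le_right ENNReal.ofReal_ne_top ?_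
    -- key: ofReal ((∫ f)^2) ≤ ofReal (1/2) * I
    have key : ENNReal.ofReal ((∫ x, f x ∂μ) ^ 2) ≤ ENNReal.ofReal (1/2) * I := by
      by_cases hIfin : I = ⊤
      · rw [hIfin, ENNReal.mul_top (by norm_num)]
        exact le_top
      -- Hölder in ENNReal
      set G : ℝ → ENNReal := (Set.Ioi u).indicator 1 with hGdef
      have hGm : Measurable G := measurable_one.indicator measurableSet_Ioi
      have hconj : Real.HolderConjugate 2 2 := Real.HolderConjugate.two_two
      have holder := ENNReal.lintegral_mul_le_Lp_mul_Lq μ hconj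
        ((ENNReal.measurable_ofReal.comp hfm)).aemeasurable hGm.aemeasurable
      have holder' : ∫⁻ x, ENNReal.ofReal (f x) ∂μ ≤ I ^ (1/(2:ℝ)) * μ (Set.Ioi u) ^ (1/(2:ℝ)) := by
        refine le_trans (le_of_eq ?_) (holder.trans (le_of_eq ?_))
        · refine lintegral_congr fun x => ?_
          by_cases hx : x ∈ Set.Ioi u
          · simp [G, Set.indicator_of_mem hx, Function.comp]
          · have hfx : f x = 0 := by
              simp only [hf, max_eq_right_iff]
              simp only [Set.mem_Ioi, not_lt] at hx
              linarith
            simp [G, Set.indicator_of_notMem hx, Function.comp, hfx]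
        · congr 1
          · congr 1
            refine lintegral_congr fun x => ?_
            rw [Function.comp_apply, ENNReal.ofReal_rpow_of_nonneg (hfnn x) (by norm_num)]
            congr 1
            rw [show (2:ℝ) = ((2:ℕ):ℝ) by norm_num, Real.rpow_natCast]
          · congr 1
            rw [← lintegral_indicator_one measurableSet_Ioi]
            refine lintegral_congr fun x => ?_
            by_cases hx : x ∈ Set.Ioi u <;> simp [G, hx]
      -- integrability of f
      have hmem : MemLp f 2 μ := by
        refine ⟨hfm.aestronglyMeasurable, ?_⟩
        rw [eLpNorm_eq_lintegral_rpow_enorm_toReal two_ne_zero ENNReal.ofNat_ne_top]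
        refine ENNReal.rpow_lt_top_of_nonneg (by norm_num) ?_
        rw [← lt_top_iff_ne_top]
        calc ∫⁻ x, ‖f x‖ₑ ^ (2:ENNReal).toReal ∂μ
            = I := by
              refine lintegral_congr fun x => ?_
              rw [Real.enorm_eq_ofReal (hfnn x), ENNReal.toReal_ofNat,
                ENNReal.ofReal_rpow_of_nonneg (hfnn x) (by norm_num)]
              congr 1
              rw [show (2:ℝ) = ((2:ℕ):ℝ) by norm_num, Real.rpow_natCast]
          _ < ⊤ := lt_top_iff_ne_top.mpr hIfin
      have hint : Integrable f μ := hmem.integrable (by norm_num)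
      have hintF : ENNReal.ofReal (∫ x, f x ∂μ) = ∫⁻ x, ENNReal.ofReal (f x) ∂μ :=
        ofReal_integral_eq_lintegral_ofReal hint (ae_of_all _ hfnn)
      calc ENNReal.ofReal ((∫ x, f x ∂μ) ^ 2)
          = (ENNReal.ofReal (∫ x, f x ∂μ)) ^ 2 :=
            ENNReal.ofReal_pow (integral_nonneg hfnn) 2
        _ = (∫⁻ x, ENNReal.ofReal (f x) ∂μ) ^ 2 := by rw [hintF]
        _ ≤ (I ^ (1/(2:ℝ)) * μ (Set.Ioi u) ^ (1/(2:ℝ))) ^ 2 := pow_le_pow_left' holder' 2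
        _ = I * μ (Set.Ioi u) := by
            rw [mul_pow, ← ENNReal.rpow_natCast (I ^ (1/(2:ℝ))),
              ← ENNReal.rpow_natCast (μ (Set.Ioi u) ^ (1/(2:ℝ))), ← ENNReal.rpow_mul,
              ← ENNReal.rpow_mul]
            norm_num
        _ ≤ I * ENNReal.ofReal (1/2) := mul_le_mul_right hhalf I
        _ = ENNReal.ofReal (1/2) * I := mul_comm _ _
    calc ENNReal.ofReal (1/4) * I + ENNReal.ofReal ((∫ x, f x ∂μ) ^ 2)
        ≤ ENNReal.ofReal (1/4) * I + ENNReal.ofReal (1/2) * I := add_le_add le_rfl key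
      _ = ENNReal.ofReal (3/4) * I := by
          rw [← add_mul, ← ENNReal.ofReal_add (by norm_num) (by norm_num)]
          norm_num
      _ ≤ 1 * I := mul_le_mul_left (by simp [ENNReal.ofReal_le_one]; norm_num) I
      _ = I := one_mul I
  · -- the tail bound
    rw [show (1/4 * s^2 : ℝ) = 1/4 * s^2 by ring, ENNReal.ofReal_mul (by norm_num), mul_assoc]
    refine mul_le_mul_right ?_ _
    calc ENNReal.ofReal (s^2) * μ (Set.Ici (u+s))
        = ∫⁻ x in Set.Ici (u+s), ENNReal.ofReal (s^2) ∂μ := (setLIntegral_const _ _).symm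
      _ ≤ ∫⁻ x in Set.Ici (u+s), ENNReal.ofReal (f x ^ 2) ∂μ := by
          refine setLIntegral_mono (by fun_prop) fun x hx => ?_
          refine ENNReal.ofReal_le_ofReal ?_
          have hx' : s ≤ x - u := by simp only [Set.mem_Ici] at hx; linarith
          have : s ≤ f x := le_trans hx' (le_max_left _ _)
          exact pow_le_pow_left₀ hs.le this 2
      _ ≤ I := setLIntegral_le_lintegral _ _
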